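/- arXiv:1108.5095 — 3 statements merged into one kernel-verified Lean document; each statement's English description precedes it below -/
import Mathlib

section
/- For every decreasing sequence α of levels, max X^k_α + step^k_α ≥ 2^k. -/
/-- The `k`-bit reversal permutation of `{0,…,2^k−1}`. -/
def revBits (k x : ℕ) : ℕ := ∑ i ∈ Finset.range k, 2 ^ i * (x / 2 ^ (k - 1 - i) % 2)

/-- The sets of time slots `Y^k_α`.  A (decreasing) sequence `α = (l_0,…,l_r)` of the paper
is represented here as the list `[l_r, …, l_0]`, with the most recently appended level first:
`Y^k_{()} = {0,…,2^k−1}` and `Y^k_{α·(l)} = {y ∈ Y^k_α : ⌈log₂(y − min Y^k_α + 1)⌉ = l}`. -/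
noncomputable def Y (k : ℕ) : List ℕ → Finset ℕ
  | [] => Finset.range (2 ^ k)
  | l :: α => (Y k α).filter (fun y => Nat.clog 2 (y - sInf {z : ℕ | z ∈ Y k α} + 1) = l)

/-- Validity of the (reversed) sequence: the paper's `α` is strictly decreasing with
entries in `{0,…,k}`, i.e. the reversed list is strictly increasing with entries `≤ k`. -/
def ValidSeq (k : ℕ) (α : List ℕ) : Prop :=
  List.Pairwise (· < ·) α ∧ ∀ l ∈ α, l ≤ k

/-- The ranks `X^k_α = revBits_k(Y^k_α)`. -/
noncomputable def X (k : ℕ) (α : List ℕ) : Finset ℕ := (Y k α).image (revBits k)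

/-- `step^k_{()} = 1` and `step^k_{α·(l)} = 2^{k−l+1}`. -/
def stepA (k : ℕ) : List ℕ → ℕ
  | [] => 1
  | l :: _ => 2 ^ (k - l + 1)

/-! ### Auxiliary definitions -/

def lo (k : ℕ) : List ℕ → ℕ
  | [] => 0
  | l :: α => lo k α + (2 ^ l - 2 ^ (l - 1))

def len (k : ℕ) : List ℕ → ℕ
  | [] => 2 ^ k
  | l :: _ => 2 ^ (l - 1)

lemma two_pow_split {l : ℕ} (hl : 1 ≤ l) : 2 ^ l = 2 ^ (l - 1) + 2 ^ (l - 1) := by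
  conv_lhs => rw [show l = (l - 1) + 1 by omega]
  rw [pow_succ]
  omega

lemma two_pow_sub {l : ℕ} (hl : 1 ≤ l) : 2 ^ l - 2 ^ (l - 1) = 2 ^ (l - 1) := by
  rw [two_pow_split hl, Nat.add_sub_cancel]

lemma sum_two_pow_Ico (a b : ℕ) (h : a ≤ b) :
    ∑ i ∈ Finset.Ico a b, 2 ^ i = 2 ^ b - 2 ^ a := by
  induction b with
  | zero =>
    have : a = 0 := by omega
    simp [this]
  | succ n ih =>
    rcases Nat.lt_or_ge a (n + 1) with hlt | hge
    · have han : a ≤ n := by omega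
      rw [Finset.sum_Ico_succ_top han, ih han, pow_succ]
      have h1 : 2 ^ a ≤ 2 ^ n := Nat.pow_le_pow_right (by norm_num) han
      generalize 2 ^ a = A at *
      generalize 2 ^ n = B at *
      omega
    · have : a = n + 1 := by omega
      simp [this]

lemma bit_one_of_mod {y l j : ℕ} (hj : j < l) (hy : y % 2 ^ l = 2 ^ l - 1) :
    y / 2 ^ j % 2 = 1 := by
  have h1 : (y % 2 ^ l).testBit j = (decide (j < l) && y.testBit j) :=
    Nat.testBit_mod_two_pow y l j
  rw [hy, Nat.testBit_two_pow_sub_one] at h1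
  simp [hj] at h1
  have h2 : Nat.testBit y j = decide (y / 2 ^ j % 2 = 1) := Nat.testBit_eq_decide_div_mod_eq
  rw [h1] at h2
  simpa using h2.symm

/-- Key bound: if the low `l` bits of `y` are all ones, `revBits k y ≥ 2^k - 2^(k-l)`. -/
lemma revBits_ge {k l y : ℕ} (hl : 1 ≤ l) (hlk : l ≤ k) (hy : y % 2 ^ l = 2 ^ l - 1) :
    2 ^ k - 2 ^ (k - l) ≤ revBits k y := by
  have hsub : Finset.Ico (k - l) k ⊆ Finset.range k := by
    intro i hi; simp only [Finset.mem_Ico] at hi; exact Finset.mem_range.2 hi.2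
  have h1 : ∑ i ∈ Finset.Ico (k - l) k, 2 ^ i ≤ revBits k y := by
    rw [revBits]
    refine le_trans (le_of_eq ?_) (Finset.sum_le_sum_of_subset hsub)
    refine Finset.sum_congr rfl fun i hi => ?_
    simp only [Finset.mem_Ico] at hi
    have hkl : k - 1 - i < l := by omega
    rw [bit_one_of_mod hkl hy, mul_one]
  calc 2 ^ k - 2 ^ (k - l) = ∑ i ∈ Finset.Ico (k - l) k, 2 ^ i :=
        (sum_two_pow_Ico (k - l) k (by omega)).symm
    _ ≤ revBits k y := h1

lemma lo_dvd (k l : ℕ) : ∀ β : List ℕ, List.Pairwise (· < ·) β → (∀ j ∈ β, l < j) →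
    2 ^ l ∣ lo k β := by
  intro β
  induction β with
  | nil => intro _ _; simp [lo]
  | cons j γ ih =>
    intro hs hmem
    have hj : l < j := hmem j (by simp)
    rw [lo, two_pow_sub (by omega)]
    exact dvd_add (ih hs.of_cons fun a ha => lt_trans hj (List.rel_of_pairwise_cons hs ha))
      (pow_dvd_pow 2 (by omega))

lemma len_pos (k : ℕ) (α : List ℕ) : 0 < len k α := by
  cases α <;> exact Nat.pow_pos (by norm_num)

lemma sInf_Ico (a s : ℕ) (hs : 0 < s) : sInf {z : ℕ | z ∈ Finset.Ico a (a + s)} = a := by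
  have ha : a ∈ {z : ℕ | z ∈ Finset.Ico a (a + s)} := by simp [hs]
  refine le_antisymm (Nat.sInf_le ha) ?_
  refine le_csInf ⟨a, ha⟩ fun b hb => ?_
  simp only [Set.mem_setOf_eq, Finset.mem_Ico] at hb
  exact hb.1

lemma pow_le_len (k l : ℕ) (α : List ℕ) (h : ValidSeq k (l :: α)) : 2 ^ l ≤ len k α := by
  cases α with
  | nil => exact Nat.pow_le_pow_right (by norm_num) (h.2 l (by simp))
  | cons j γ =>
    have hlj : l < j := List.rel_of_pairwise_cons h.1 (by simp)
    show 2 ^ l ≤ 2 ^ (j - 1)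
    exact Nat.pow_le_pow_right (by norm_num) (by omega)

lemma Y_eq_Ico (k : ℕ) : ∀ α : List ℕ, ValidSeq k α →
    Y k α = Finset.Ico (lo k α) (lo k α + len k α) := by
  intro α
  induction α with
  | nil =>
    intro _
    show Finset.range (2 ^ k) = Finset.Ico (lo k []) (lo k [] + len k [])
    rw [Finset.range_eq_Ico]
    simp [lo, len]
  | cons l β ih =>
    intro h
    have hβ : ValidSeq k β := ⟨h.1.of_cons, fun j hj => h.2 j (by simp [hj])⟩
    have hY := ih hβ
    have hinf : sInf {z : ℕ | z ∈ Y k β} = lo k β := by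
      rw [hY]; exact sInf_Ico _ _ (len_pos k β)
    have hlen : 2 ^ l ≤ len k β := pow_le_len k l β h
    rw [Y, hinf, hY]
    ext y
    simp only [Finset.mem_filter, Finset.mem_Ico]
    set m := lo k β
    constructor
    · rintro ⟨⟨hy1, hy2⟩, hclog⟩
      rcases Nat.eq_zero_or_pos l with rfl | hl
      · have hle1 : y - m + 1 ≤ 2 ^ 0 := by
          rw [← hclog]; exact Nat.le_pow_clog (by norm_num) _
        simp only [pow_zero] at hle1
        have hym : y = m := by omega
        simp only [lo, len, hym, pow_zero, Nat.sub_self, Nat.sub_zero, Nat.add_zero]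
        omega
      · have hub : y - m + 1 ≤ 2 ^ l := by
          rw [← hclog]; exact Nat.le_pow_clog (by norm_num) _
        have hlb : 2 ^ (l - 1) < y - m + 1 := by
          by_contra hc
          push_neg at hc
          have : Nat.clog 2 (y - m + 1) ≤ l - 1 :=
            (Nat.clog_le_iff_le_pow (by norm_num)).2 hc
          omega
        rw [two_pow_split hl] at hub hlen
        simp only [lo, len, two_pow_sub hl]
        constructor <;> omega
    · rintro ⟨hy1, hy2⟩
      simp only [lo, len] at hy1 hy2
      rcases Nat.eq_zero_or_pos l with rfl | hl
      · simp only [pow_zero, Nat.sub_self, Nat.sub_zero, Nat.add_zero] at hy1 hy2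
        have hym : y = m := by omega
        subst hym
        refine ⟨⟨le_refl _, by have := len_pos k β; omega⟩, ?_⟩
        have h1 : m - m + 1 = 1 := by omega
        rw [h1, Nat.clog_one_right]
      · rw [two_pow_sub hl] at hy1 hy2
        rw [two_pow_split hl] at hlen
        have hrange : y < m + len k β := by omega
        refine ⟨⟨by omega, hrange⟩, ?_⟩
        refine le_antisymm ?_ ?_
        · refine (Nat.clog_le_iff_le_pow (by norm_num)).2 ?_
          rw [two_pow_split hl]
          omega
        · by_contra hc
          push_neg at hc
          have hcl : Nat.clog 2 (y - m + 1) ≤ l - 1 := by omega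
          have := (Nat.clog_le_iff_le_pow (by norm_num : (1:ℕ) < 2)).1 hcl
          omega

lemma mem_X_le_sSup {k : ℕ} {α : List ℕ} {z : ℕ} (hz : z ∈ X k α) :
    z ≤ sSup {w : ℕ | w ∈ X k α} := by
  have hfin : ({w : ℕ | w ∈ X k α}).Finite := (X k α).finite_toSet
  exact le_csSup hfin.bddAbove hz

/-- `max X^k_α + step^k_α ≥ 2^k`. -/
theorem max_add_step_ge (k : ℕ) (α : List ℕ) (h : ValidSeq k α) :
    2 ^ k ≤ sSup {z : ℕ | z ∈ X k α} + stepA k α := by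
  cases α with
  | nil =>
    rcases Nat.eq_zero_or_pos k with rfl | hk
    · simp [stepA]
    · have hpk : 0 < 2 ^ k := Nat.pow_pos (by norm_num)
      have hy : (2 ^ k - 1) ∈ Y k [] := by
        show 2 ^ k - 1 ∈ Finset.range (2 ^ k)
        exact Finset.mem_range.2 (by omega)
      have hz : revBits k (2 ^ k - 1) ∈ X k [] := Finset.mem_image_of_mem _ hy
      have hb : 2 ^ k - 2 ^ (k - k) ≤ revBits k (2 ^ k - 1) :=
        revBits_ge hk le_rfl (Nat.mod_eq_of_lt (by omega))
      have hle := mem_X_le_sSup hz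
      simp only [Nat.sub_self, pow_zero] at hb
      show 2 ^ k ≤ sSup {z : ℕ | z ∈ X k []} + 1
      omega
  | cons l β =>
    rcases Nat.eq_zero_or_pos l with rfl | hl
    · have hstep : 2 ^ k < stepA k (0 :: β) := by
        show 2 ^ k < 2 ^ (k - 0 + 1)
        exact Nat.pow_lt_pow_right (by norm_num) (by omega)
      omega
    · have hYe := Y_eq_Ico k (l :: β) h
      have hlk : l ≤ k := h.2 l (by simp)
      have hdvd : 2 ^ l ∣ lo k β :=
        lo_dvd k l β h.1.of_cons fun j hj => List.rel_of_pairwise_cons h.1 hj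
      have hpl : 0 < 2 ^ l := Nat.pow_pos (by norm_num)
      set y : ℕ := lo k β + 2 ^ l - 1 with hy_def
      have hy : y ∈ Y k (l :: β) := by
        rw [hYe]
        simp only [Finset.mem_Ico, lo, len, two_pow_sub hl]
        rw [two_pow_split hl] at hy_def hpl
        have hp1 : 0 < 2 ^ (l - 1) := Nat.pow_pos (by norm_num)
        clear hdvd hYe
        constructor <;> omega
      have hymod : y % 2 ^ l = 2 ^ l - 1 := by
        obtain ⟨c, hc⟩ := hdvd
        have hyc : y = 2 ^ l * c + (2 ^ l - 1) := by
          rw [hy_def, hc]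
          generalize 2 ^ l * c = A
          generalize hP : 2 ^ l = P at hpl ⊢
          omega
        rw [hyc, Nat.mul_add_mod]
        exact Nat.mod_eq_of_lt (by omega)
      have hb : 2 ^ k - 2 ^ (k - l) ≤ revBits k y := revBits_ge hl hlk hymod
      have hz : revBits k y ∈ X k (l :: β) := Finset.mem_image_of_mem _ hy
      have hle := mem_X_le_sSup hz
      have hmono : 2 ^ (k - l) ≤ 2 ^ (k - l + 1) :=
        Nat.pow_le_pow_right (by norm_num) (by omega)
      have hkl : 2 ^ (k - l) ≤ 2 ^ k := Nat.pow_le_pow_right (by norm_num) (by omega)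
      show 2 ^ k ≤ sSup {z : ℕ | z ∈ X k (l :: β)} + 2 ^ (k - l + 1)
      generalize hA : 2 ^ (k - l) = A at *
      generalize hB : 2 ^ (k - l + 1) = B at *
      generalize hC : 2 ^ k = C at *
      omega
end

section
/- For a decreasing sequence α with α = α'·(l) where l ≥ 2, the set X^k_α equals {x : 0 ≤ x < 2^k and x mod 2^{k−l+1} = revBits_k(min Y^k_α)}, i.e., X^k_α consists exactly of the numbers below 2^k whose k−l+1 least significant bits agree with those of revBits_k(min Y^k_α). -/
/-! ### Auxiliary lemmas -/

lemma sum_bits_lt (f : ℕ → ℕ) (hf : ∀ i, f i ≤ 1) (n : ℕ) :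
    ∑ j ∈ Finset.range n, 2 ^ j * f j < 2 ^ n := by
  induction n with
  | zero => simp
  | succ n ih =>
    rw [Finset.sum_range_succ]
    have h1 := hf n
    have h2 : 2 ^ n * f n ≤ 2 ^ n * 1 := Nat.mul_le_mul le_rfl h1
    rw [mul_one] at h2
    have h3 : (2:ℕ) ^ (n + 1) = 2 ^ n + 2 ^ n := by ring
    omega

lemma sum_bits_div (f : ℕ → ℕ) (hf : ∀ i, f i ≤ 1) (n i : ℕ) (hi : i < n) :
    (∑ j ∈ Finset.range n, 2 ^ j * f j) / 2 ^ i % 2 = f i := by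
  have hsplit : ∑ j ∈ Finset.range n, 2 ^ j * f j
      = (∑ j ∈ Finset.range i, 2 ^ j * f j)
        + 2 ^ i * (f i + 2 * ∑ j ∈ Finset.range (n - (i + 1)), 2 ^ j * f (i + 1 + j)) := by
    have h1 : ∑ j ∈ Finset.range n, 2 ^ j * f j
        = ∑ j ∈ Finset.range (i + 1), 2 ^ j * f j
          + ∑ j ∈ Finset.Ico (i + 1) n, 2 ^ j * f j := by
      rw [Finset.range_eq_Ico, ← Finset.sum_Ico_consecutive _ (Nat.zero_le (i + 1)) hi, ← Finset.range_eq_Ico]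
    have h2 : ∑ j ∈ Finset.Ico (i + 1) n, 2 ^ j * f j
        = 2 ^ (i + 1) * ∑ j ∈ Finset.range (n - (i + 1)), 2 ^ j * f (i + 1 + j) := by
      rw [Finset.sum_Ico_eq_sum_range, Finset.mul_sum]
      apply Finset.sum_congr rfl
      intro j _
      rw [← mul_assoc, ← pow_add]
    rw [h1, h2, Finset.sum_range_succ]
    ring
  rw [hsplit, Nat.add_mul_div_left _ _ (pow_pos (by norm_num : (0:ℕ) < 2) i),
      Nat.div_eq_of_lt (sum_bits_lt f hf i)]
  have := hf i
  omega

lemma bit_le_one (x j : ℕ) : x / 2 ^ j % 2 ≤ 1 :=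
  Nat.lt_succ_iff.mp (Nat.mod_lt _ (by norm_num))

lemma revBits_lt (k x : ℕ) : revBits k x < 2 ^ k :=
  sum_bits_lt _ (fun i => bit_le_one x (k - 1 - i)) k

lemma revBits_bit (k x i : ℕ) (hi : i < k) :
    revBits k x / 2 ^ i % 2 = x / 2 ^ (k - 1 - i) % 2 :=
  sum_bits_div _ (fun j => bit_le_one x (k - 1 - j)) k i hi

lemma eq_of_bits (a b : ℕ) (h : ∀ j, a / 2 ^ j % 2 = b / 2 ^ j % 2) : a = b := by
  apply Nat.eq_of_testBit_eq
  intro i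
  simp [Nat.testBit_eq_decide_div_mod_eq, h i]

lemma revBits_injOn (k : ℕ) : ∀ a < 2 ^ k, ∀ b < 2 ^ k, revBits k a = revBits k b → a = b := by
  intro a ha b hb hab
  apply eq_of_bits
  intro j
  by_cases hj : j < k
  · have hi : k - 1 - j < k := by omega
    have e : k - 1 - (k - 1 - j) = j := by omega
    have h1 := revBits_bit k a (k - 1 - j) hi
    have h2 := revBits_bit k b (k - 1 - j) hi
    rw [e] at h1 h2
    rw [← h1, ← h2, hab]
  · have h2j : (2:ℕ) ^ k ≤ 2 ^ j := Nat.pow_le_pow_right (by norm_num) (by omega)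
    rw [Nat.div_eq_of_lt (by omega), Nat.div_eq_of_lt (by omega)]

lemma revBits_image (j : ℕ) :
    (Finset.range (2 ^ j)).image (revBits j) = Finset.range (2 ^ j) := by
  apply Finset.eq_of_subset_of_card_le
  · intro x hx
    obtain ⟨t, _, rfl⟩ := Finset.mem_image.mp hx
    exact Finset.mem_range.mpr (revBits_lt j t)
  · rw [Finset.card_image_of_injOn]
    intro a ha b hb
    exact revBits_injOn j a (Finset.mem_range.mp ha) b (Finset.mem_range.mp hb)

lemma bit_zero_of_dvd (m j L : ℕ) (h : 2 ^ L ∣ m) (hj : j < L) : m / 2 ^ j % 2 = 0 := by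
  have hdj : (2:ℕ) ^ j ∣ m := dvd_trans (pow_dvd_pow 2 (by omega)) h
  have h2 : 2 ∣ m / 2 ^ j := by
    rw [Nat.dvd_div_iff_mul_dvd hdj]
    have e : (2:ℕ) ^ j * 2 = 2 ^ (j + 1) := by ring
    rw [e]
    exact dvd_trans (pow_dvd_pow 2 (by omega)) h
  omega

lemma revBits_add (k l m t : ℕ) (hl1 : 1 ≤ l) (hlk : l ≤ k)
    (hm : 2 ^ (l - 1) ∣ m) (ht : t < 2 ^ (l - 1)) :
    revBits k (m + t) = revBits k m + 2 ^ (k - l + 1) * revBits (l - 1) t := by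
  have hbit : ∀ j, (m + t) / 2 ^ j % 2 = m / 2 ^ j % 2 + t / 2 ^ j % 2 := by
    intro j
    by_cases hj : j < l - 1
    · have e1 : m / 2 ^ j % 2 = 0 := bit_zero_of_dvd m j (l - 1) hm hj
      have hdj : (2:ℕ) ^ j ∣ m := dvd_trans (pow_dvd_pow 2 (by omega)) hm
      have e2 : (m + t) / 2 ^ j = m / 2 ^ j + t / 2 ^ j := Nat.add_div_of_dvd_right hdj
      have := bit_le_one t j
      omega
    · -- j ≥ l - 1
      have hpow : (2:ℕ) ^ (l - 1) ≤ 2 ^ j := Nat.pow_le_pow_right (by norm_num) (by omega)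
      have ht0 : t / 2 ^ j = 0 := Nat.div_eq_of_lt (by omega)
      have hdmod : (2:ℕ) ^ (l - 1) ∣ m % 2 ^ j :=
        (Nat.dvd_mod_iff (pow_dvd_pow 2 (by omega))).mpr hm
      have hmlt : m % 2 ^ j < 2 ^ j := Nat.mod_lt _ (pow_pos (by norm_num : (0:ℕ) < 2) j)
      have hsum : m % 2 ^ j + t < 2 ^ j := by
        obtain ⟨c, hc⟩ := hdmod
        obtain ⟨d, hd⟩ : ∃ d, (2:ℕ) ^ j = 2 ^ (l - 1) * d :=
          ⟨2 ^ (j - (l - 1)), by rw [← pow_add]; congr 1; omega⟩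
        have hcd : c < d := by
          have hx : 2 ^ (l - 1) * c < 2 ^ (l - 1) * d := by rw [← hc, ← hd]; exact hmlt
          exact lt_of_mul_lt_mul_left hx (Nat.zero_le _)
        calc m % 2 ^ j + t = 2 ^ (l - 1) * c + t := by rw [hc]
          _ < 2 ^ (l - 1) * c + 2 ^ (l - 1) := Nat.add_lt_add_left ht _
          _ = 2 ^ (l - 1) * (c + 1) := by ring
          _ ≤ 2 ^ (l - 1) * d := Nat.mul_le_mul le_rfl hcd
          _ = 2 ^ j := hd.symm
      have e0 := Nat.div_add_mod m (2 ^ j)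
      have e2 : (m + t) / 2 ^ j = m / 2 ^ j := by
        have hmt : m + t = 2 ^ j * (m / 2 ^ j) + (m % 2 ^ j + t) := by
          rw [← add_assoc, e0]
        rw [hmt, Nat.mul_add_div (pow_pos (by norm_num : (0:ℕ) < 2) j),
            Nat.div_eq_of_lt hsum, add_zero]
      rw [e2, ht0]
      simp
  unfold revBits
  simp only [hbit, mul_add, Finset.sum_add_distrib]
  congr 1
  have hsub : Finset.Ico (k - l + 1) k ⊆ Finset.range k := by
    intro x hx
    exact Finset.mem_range.mpr (Finset.mem_Ico.mp hx).2
  have hvanish : ∀ i ∈ Finset.range k, i ∉ Finset.Ico (k - l + 1) k →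
      2 ^ i * (t / 2 ^ (k - 1 - i) % 2) = 0 := by
    intro i hi hni
    simp only [Finset.mem_range] at hi
    simp only [Finset.mem_Ico] at hni
    have hii : i < k - l + 1 := by omega
    have hle : l - 1 ≤ k - 1 - i := by omega
    have ht0 : t / 2 ^ (k - 1 - i) = 0 :=
      Nat.div_eq_of_lt (lt_of_lt_of_le ht (Nat.pow_le_pow_right (by norm_num) hle))
    rw [ht0]
    simp
  rw [← Finset.sum_subset hsub hvanish, Finset.sum_Ico_eq_sum_range, Finset.mul_sum]
  have hcard : k - (k - l + 1) = l - 1 := by omega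
  rw [hcard]
  apply Finset.sum_congr rfl
  intro i hi
  simp only [Finset.mem_range] at hi
  have e1 : k - 1 - (k - l + 1 + i) = l - 1 - 1 - i := by omega
  rw [e1, pow_add, mul_assoc]

lemma revBits_dvd_lt (k l m : ℕ) (hl1 : 1 ≤ l) (hlk : l ≤ k) (hm : 2 ^ (l - 1) ∣ m) :
    revBits k m < 2 ^ (k - l + 1) := by
  unfold revBits
  have hvanish : ∀ i ∈ Finset.range k, i ∉ Finset.range (k - l + 1) →
      2 ^ i * (m / 2 ^ (k - 1 - i) % 2) = 0 := by
    intro i hi hni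
    simp only [Finset.mem_range] at hi hni
    have hlt : k - 1 - i < l - 1 := by omega
    rw [bit_zero_of_dvd m _ _ hm hlt]
    simp
  rw [← Finset.sum_subset (Finset.range_subset_range.mpr (by omega)) hvanish]
  exact sum_bits_lt _ (fun i => bit_le_one m (k - 1 - i)) _

lemma sInf_set_Ico (m c : ℕ) (hc : 0 < c) :
    sInf {z : ℕ | z ∈ Finset.Ico m (m + c)} = m := by
  have hmem : m ∈ {z : ℕ | z ∈ Finset.Ico m (m + c)} := by
    simp only [Set.mem_setOf_eq, Finset.mem_Ico]
    omega
  refine le_antisymm (Nat.sInf_le hmem) ?_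
  have h := Nat.sInf_mem (⟨m, hmem⟩ : Set.Nonempty _)
  simp only [Set.mem_setOf_eq] at h
  exact (Finset.mem_Ico.mp h).1

/-- The interval bound exponent. -/
def bnd (k : ℕ) : List ℕ → ℕ
  | [] => k
  | l :: _ => l - 1

lemma Y_struct (k : ℕ) : ∀ (α : List ℕ), List.Pairwise (· < ·) α →
    (∀ x ∈ α, 2 ≤ x ∧ x ≤ k) →
    ∃ m, Y k α = Finset.Ico m (m + 2 ^ bnd k α) ∧ 2 ^ bnd k α ∣ m ∧ m + 2 ^ bnd k α ≤ 2 ^ k := by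
  intro α
  induction α with
  | nil =>
    intro _ _
    refine ⟨0, ?_, dvd_zero _, by simp [bnd]⟩
    show Finset.range (2 ^ k) = Finset.Ico 0 (0 + 2 ^ k)
    rw [zero_add, Finset.range_eq_Ico]
  | cons l α' ih =>
    intro hs hb
    obtain ⟨hs1, hs2⟩ := List.pairwise_cons.mp hs
    obtain ⟨m', hY', hdvd', hle'⟩ := ih hs2 (fun x hx => hb x (List.mem_cons_of_mem _ hx))
    have hl2 : 2 ≤ l := (hb l (List.mem_cons_self)).1
    have hlk : l ≤ k := (hb l (List.mem_cons_self)).2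
    have hlb : l ≤ bnd k α' := by
      cases α' with
      | nil => simpa [bnd] using hlk
      | cons l' β =>
        have := hs1 l' (List.mem_cons_self)
        simp only [bnd]
        omega
    have hpos : (0:ℕ) < 2 ^ bnd k α' := pow_pos (by norm_num : (0:ℕ) < 2) _
    have hinf : sInf {z : ℕ | z ∈ Y k α'} = m' := by
      rw [hY']; exact sInf_set_Ico _ _ hpos
    have hpow : (2:ℕ) ^ l ≤ 2 ^ bnd k α' := Nat.pow_le_pow_right (by norm_num) hlb
    have hpl : (2:ℕ) ^ l = 2 ^ (l - 1) + 2 ^ (l - 1) := by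
      obtain ⟨n, rfl⟩ : ∃ n, l = n + 1 := ⟨l - 1, by omega⟩
      rw [Nat.add_sub_cancel, pow_succ]
      omega
    refine ⟨m' + 2 ^ (l - 1), ?_, ?_, ?_⟩
    · show (Y k α').filter (fun y => Nat.clog 2 (y - sInf {z : ℕ | z ∈ Y k α'} + 1) = l)
        = Finset.Ico (m' + 2 ^ (l - 1)) (m' + 2 ^ (l - 1) + 2 ^ (l - 1))
      ext y
      simp only [Finset.mem_filter]
      rw [hinf, hY']
      simp only [Finset.mem_Ico]
      constructor
      · rintro ⟨⟨hy1, hy2⟩, hcl⟩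
        have h1 : (2:ℕ) ^ (l - 1) < y - m' + 1 :=
          (Nat.lt_clog_iff_pow_lt (by norm_num)).mp (by omega)
        have h2 : y - m' + 1 ≤ 2 ^ l :=
          (Nat.clog_le_iff_le_pow (by norm_num)).mp (by omega)
        omega
      · rintro ⟨hy1, hy2⟩
        have h1 : (2:ℕ) ^ (l - 1) < y - m' + 1 := by omega
        have h2 : y - m' + 1 ≤ 2 ^ l := by omega
        have h3 := (Nat.lt_clog_iff_pow_lt (b := 2) (by norm_num)).mpr h1
        have h4 := (Nat.clog_le_iff_le_pow (b := 2) (by norm_num)).mpr h2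
        exact ⟨⟨by omega, by omega⟩, by omega⟩
    · show (2:ℕ) ^ (l - 1) ∣ m' + 2 ^ (l - 1)
      exact dvd_add (dvd_trans (pow_dvd_pow 2 (by omega)) hdvd') dvd_rfl
    · show m' + 2 ^ (l - 1) + 2 ^ (l - 1) ≤ 2 ^ k
      omega

/-- For `α = α'·(l)` with `l ≥ 2`, `X^k_α` consists exactly of the numbers below `2^k`
whose `k−l+1` least significant bits agree with `revBits_k(min Y^k_α)`. -/
theorem X_residue_class (k : ℕ) (α : List ℕ) (l : ℕ) (h : ValidSeq k (l :: α)) (hl : 2 ≤ l) :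
    X k (l :: α) = (Finset.range (2 ^ k)).filter
      (fun x => x % 2 ^ (k - l + 1) = revBits k (sInf {y : ℕ | y ∈ Y k (l :: α)})) := by
  obtain ⟨hs, hk⟩ := h
  obtain ⟨hs1, hs2⟩ := List.pairwise_cons.mp hs
  have hb : ∀ x ∈ (l :: α), 2 ≤ x ∧ x ≤ k := by
    intro x hx
    rcases List.mem_cons.mp hx with rfl | hx
    · exact ⟨hl, hk _ (List.mem_cons_self)⟩
    · exact ⟨by have := hs1 x hx; omega, hk _ (List.mem_cons_of_mem _ hx)⟩
  obtain ⟨m, hY, hdvd, hle⟩ := Y_struct k (l :: α) hs hb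
  have hlk : l ≤ k := hk l (List.mem_cons_self)
  replace hY : Y k (l :: α) = Finset.Ico m (m + 2 ^ (l - 1)) := hY
  replace hdvd : (2:ℕ) ^ (l - 1) ∣ m := hdvd
  replace hle : m + 2 ^ (l - 1) ≤ 2 ^ k := hle
  have hinf : sInf {y : ℕ | y ∈ Y k (l :: α)} = m := by
    rw [hY]; exact sInf_set_Ico _ _ (pow_pos (by norm_num : (0:ℕ) < 2) _)
  have hrlt : revBits k m < 2 ^ (k - l + 1) := revBits_dvd_lt k l m (by omega) hlk hdvd
  have hpow : (2:ℕ) ^ (k - l + 1) * 2 ^ (l - 1) = 2 ^ k := by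
    rw [← pow_add]; congr 1; omega
  unfold X
  ext x
  simp only [Finset.mem_image, Finset.mem_filter, Finset.mem_range]
  rw [hinf]
  simp only [hY, Finset.mem_Ico]
  constructor
  · rintro ⟨y, ⟨hy1, hy2⟩, rfl⟩
    obtain ⟨t, rfl⟩ : ∃ t, y = m + t := ⟨y - m, by omega⟩
    have ht : t < 2 ^ (l - 1) := by omega
    rw [revBits_add k l m t (by omega) hlk hdvd ht]
    have hs' : revBits (l - 1) t < 2 ^ (l - 1) := revBits_lt (l - 1) t
    constructor
    · calc revBits k m + 2 ^ (k - l + 1) * revBits (l - 1) t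
          < 2 ^ (k - l + 1) + 2 ^ (k - l + 1) * revBits (l - 1) t :=
            Nat.add_lt_add_right hrlt _
        _ = 2 ^ (k - l + 1) * (revBits (l - 1) t + 1) := by ring
        _ ≤ 2 ^ (k - l + 1) * 2 ^ (l - 1) := Nat.mul_le_mul le_rfl (by omega)
        _ = 2 ^ k := hpow
    · rw [Nat.add_mul_mod_self_left, Nat.mod_eq_of_lt hrlt]
  · rintro ⟨hx1, hx2⟩
    have hslt : x / 2 ^ (k - l + 1) < 2 ^ (l - 1) := by
      rw [Nat.div_lt_iff_lt_mul (pow_pos (by norm_num : (0:ℕ) < 2) _), mul_comm, hpow]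
      exact hx1
    obtain ⟨t, ht, hts⟩ : ∃ t, t ∈ Finset.range (2 ^ (l - 1)) ∧
        revBits (l - 1) t = x / 2 ^ (k - l + 1) := by
      have hmem : x / 2 ^ (k - l + 1) ∈ Finset.range (2 ^ (l - 1)) := Finset.mem_range.mpr hslt
      rw [← revBits_image (l - 1)] at hmem
      exact Finset.mem_image.mp hmem
    have htlt : t < 2 ^ (l - 1) := Finset.mem_range.mp ht
    refine ⟨m + t, ⟨by omega, by omega⟩, ?_⟩
    rw [revBits_add k l m t (by omega) hlk hdvd htlt, hts, ← hx2]
    exact Nat.mod_add_div x (2 ^ (k - l + 1))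
end

section
/- For every decreasing sequence α of levels, minStep(X^k_α) ≥ step^k_α, where minStep(X) is the minimal positive difference between two distinct elements of X (infinity if X is a singleton). -/
lemma clog_eq_iff {l n : ℕ} (hl : 1 ≤ l) : Nat.clog 2 n = l ↔ 2 ^ (l - 1) < n ∧ n ≤ 2 ^ l := by
  constructor
  · rintro rfl
    refine ⟨?_, Nat.le_pow_clog one_lt_two n⟩
    rw [← Nat.lt_clog_iff_pow_lt one_lt_two]
    omega
  · rintro ⟨h1, h2⟩
    have a1 : Nat.clog 2 n ≤ l := (Nat.clog_le_iff_le_pow one_lt_two).2 h2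
    have a2 : l - 1 < Nat.clog 2 n := (Nat.lt_clog_iff_pow_lt one_lt_two).2 h1
    omega

lemma Y_nil (k : ℕ) : Y k [] = Finset.range (2 ^ k) := rfl

lemma Y_cons (k l : ℕ) (α : List ℕ) :
    Y k (l :: α) =
      (Y k α).filter (fun y => Nat.clog 2 (y - sInf {z : ℕ | z ∈ Y k α} + 1) = l) := rfl

/-- Structure of `Y k (l :: β)` for valid sequences with `1 ≤ l`. -/
lemma Y_struct_s12 (k : ℕ) : ∀ (β : List ℕ) (l : ℕ), ValidSeq k (l :: β) → 1 ≤ l →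
    ∃ M, 2 ^ l ∣ M ∧ M + 2 ^ l ≤ 2 ^ k ∧
      Y k (l :: β) = Finset.Ico (M + 2 ^ (l - 1)) (M + 2 ^ l) := by
  intro β
  induction β with
  | nil =>
    intro l hv hl
    have hlk : l ≤ k := hv.2 l (by simp)
    have h2k : 2 ^ l ≤ 2 ^ k := Nat.pow_le_pow_right (by norm_num) hlk
    have hpw : 2 ^ (l - 1) < 2 ^ l := Nat.pow_lt_pow_right (by norm_num) (by omega)
    refine ⟨0, dvd_zero _, by omega, ?_⟩
    have hs : sInf {z : ℕ | z ∈ Y k ([] : List ℕ)} = 0 := by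
      apply Nat.sInf_eq_zero.2
      left
      simp only [Set.mem_setOf_eq, Y_nil, Finset.mem_range]
      positivity
    rw [Y_cons]
    ext y
    rw [Finset.mem_filter, hs, Y_nil, Finset.mem_range, Finset.mem_Ico, Nat.sub_zero,
      clog_eq_iff hl]
    omega
  | cons l' γ ih =>
    intro l hv hl
    have hll' : l < l' := (List.pairwise_cons.1 hv.1).1 l' (by simp)
    have hv' : ValidSeq k (l' :: γ) :=
      ⟨(List.pairwise_cons.1 hv.1).2, fun m hm => hv.2 m (by simp [hm])⟩
    obtain ⟨M, hdvd, hle, hY⟩ := ih l' hv' (by omega)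
    have hpow : 2 ^ (l' - 1) < 2 ^ l' := Nat.pow_lt_pow_right (by norm_num) (by omega)
    have hpw : 2 ^ (l - 1) < 2 ^ l := Nat.pow_lt_pow_right (by norm_num) (by omega)
    have h2l : 2 ^ l ≤ 2 ^ (l' - 1) := Nat.pow_le_pow_right (by norm_num) (by omega)
    have hpow2 : 2 ^ (l' - 1) + 2 ^ (l' - 1) = 2 ^ l' := by
      rw [← two_mul, ← pow_succ']
      congr 1
      omega
    have hone : (1:ℕ) ≤ 2 ^ (l - 1) := Nat.one_le_two_pow
    have hone' : (1:ℕ) ≤ 2 ^ (l' - 1) := Nat.one_le_two_pow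
    have hs : sInf {z : ℕ | z ∈ Y k (l' :: γ)} = M + 2 ^ (l' - 1) := by
      have hmem : M + 2 ^ (l' - 1) ∈ {z : ℕ | z ∈ Y k (l' :: γ)} := by
        simp only [Set.mem_setOf_eq, hY, Finset.mem_Ico]
        omega
      refine le_antisymm (Nat.sInf_le hmem) ?_
      have hne : {z : ℕ | z ∈ Y k (l' :: γ)}.Nonempty := ⟨_, hmem⟩
      have hmem2 : sInf {z : ℕ | z ∈ Y k (l' :: γ)} ∈ Y k (l' :: γ) := Nat.sInf_mem hne
      generalize sInf {z : ℕ | z ∈ Y k (l' :: γ)} = S at hmem2 ⊢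
      rw [hY, Finset.mem_Ico] at hmem2
      omega
    refine ⟨M + 2 ^ (l' - 1), ?_, by omega, ?_⟩
    · exact Nat.dvd_add (dvd_trans (Nat.pow_dvd_pow 2 (by omega)) hdvd)
        (Nat.pow_dvd_pow 2 (by omega))
    · rw [Y_cons]
      ext y
      rw [Finset.mem_filter, hs, hY, Finset.mem_Ico, Finset.mem_Ico, clog_eq_iff hl]
      omega

lemma revBits_modEq (k l : ℕ) (hl : 1 ≤ l) (hlk : l ≤ k) {y1 y2 : ℕ}
    (h : y1 / 2 ^ (l - 1) = y2 / 2 ^ (l - 1)) :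
    revBits k y1 ≡ revBits k y2 [MOD 2 ^ (k - l + 1)] := by
  set n := k - l + 1 with hn
  have hnk : n ≤ k := by omega
  have hsplit : ∀ y : ℕ, revBits k y =
      (∑ i ∈ Finset.range n, 2 ^ i * (y / 2 ^ (k - 1 - i) % 2)) +
      ∑ i ∈ Finset.Ico n k, 2 ^ i * (y / 2 ^ (k - 1 - i) % 2) := by
    intro y
    rw [revBits, Finset.range_eq_Ico, ← Finset.sum_Ico_consecutive _ (Nat.zero_le n) hnk,
      ← Finset.range_eq_Ico]
  have hlow : (∑ i ∈ Finset.range n, 2 ^ i * (y1 / 2 ^ (k - 1 - i) % 2)) =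
      ∑ i ∈ Finset.range n, 2 ^ i * (y2 / 2 ^ (k - 1 - i) % 2) := by
    apply Finset.sum_congr rfl
    intro i hi
    rw [Finset.mem_range] at hi
    have hdecomp : ∀ y : ℕ, y / 2 ^ (k - 1 - i) = (y / 2 ^ (l - 1)) / 2 ^ (k - l - i) := by
      intro y
      rw [Nat.div_div_eq_div_mul, ← pow_add]
      congr 2
      omega
    rw [hdecomp y1, hdecomp y2, h]
  have hdvd : ∀ y : ℕ, (2 ^ n : ℕ) ∣ ∑ i ∈ Finset.Ico n k, 2 ^ i * (y / 2 ^ (k - 1 - i) % 2) := by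
    intro y
    apply Finset.dvd_sum
    intro i hi
    rw [Finset.mem_Ico] at hi
    exact dvd_mul_of_dvd_left (pow_dvd_pow 2 hi.1) _
  rw [hsplit y1, hsplit y2, hlow]
  exact Nat.ModEq.add_left _ (((Nat.modEq_zero_iff_dvd).2 (hdvd y1)).trans
    ((Nat.modEq_zero_iff_dvd).2 (hdvd y2)).symm)

/-- `minStep(X^k_α) ≥ step^k_α`: any two distinct elements of `X^k_α` differ
by at least `step^k_α`. -/
theorem minStep_ge_step (k : ℕ) (α : List ℕ) (h : ValidSeq k α) :
    ∀ x ∈ X k α, ∀ y ∈ X k α, x < y → stepA k α ≤ y - x := by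
  intro x hx y hy hxy
  match α with
  | [] => simp only [stepA]; omega
  | l :: β =>
    simp only [X, Finset.mem_image] at hx hy
    obtain ⟨y1, hy1, hx1⟩ := hx
    obtain ⟨y2, hy2, hx2⟩ := hy
    rcases Nat.eq_zero_or_pos l with rfl | hl
    · -- level 0 : Y is a subset of a singleton
      exfalso
      have hsub : ∀ z ∈ Y k (0 :: β), z = sInf {w : ℕ | w ∈ Y k β} := by
        intro z hz
        rw [Y_cons, Finset.mem_filter] at hz
        obtain ⟨hz1, hz2⟩ := hz
        have h1 : sInf {w : ℕ | w ∈ Y k β} ≤ z := Nat.sInf_le hz1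
        have h2 : z - sInf {w : ℕ | w ∈ Y k β} + 1 ≤ 1 := by
          by_contra hc
          have hlt : (2:ℕ) ^ 0 < z - sInf {w : ℕ | w ∈ Y k β} + 1 := by
            simp only [pow_zero]
            omega
          have := (Nat.lt_clog_iff_pow_lt one_lt_two).2 hlt
          omega
        omega
      have e1 := hsub y1 hy1
      have e2 := hsub y2 hy2
      rw [e1] at hx1; rw [e2] at hx2
      omega
    · have hlk : l ≤ k := h.2 l (by simp)
      obtain ⟨M, hdvd, hle, hY⟩ := Y_struct_s12 k β l h hl
      rw [hY, Finset.mem_Ico] at hy1 hy2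
      have pos : (0:ℕ) < 2 ^ (l - 1) := pow_pos (by norm_num) _
      -- both y1, y2 have the same bits above position l-1
      have hq : ∀ z : ℕ, M + 2 ^ (l - 1) ≤ z → z < M + 2 ^ l →
          z / 2 ^ (l - 1) = M / 2 ^ (l - 1) + 1 := by
        intro z h1 h2
        obtain ⟨c, hc⟩ := hdvd
        have hpow : (2:ℕ) ^ l = 2 ^ (l - 1) * 2 := by
          rw [← pow_succ]
          congr 1
          omega
        have hc2 : M = 2 ^ (l - 1) * (2 * c) := by rw [hc, hpow]; ring
        have hM1 : 2 ^ (l - 1) * (2 * c + 1) = M + 2 ^ (l - 1) := by rw [hc2]; ring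
        have hz : z = 2 ^ (l - 1) * (2 * c + 1) + (z - (M + 2 ^ (l - 1))) := by omega
        have hs : z - (M + 2 ^ (l - 1)) < 2 ^ (l - 1) := by
          rw [hpow] at h2
          omega
        rw [hz, Nat.mul_add_div pos, Nat.div_eq_of_lt hs, hc2,
          Nat.mul_div_cancel_left _ pos]
      have heq : y1 / 2 ^ (l - 1) = y2 / 2 ^ (l - 1) := by
        rw [hq y1 hy1.1 hy1.2, hq y2 hy2.1 hy2.2]
      have hmod : revBits k y1 ≡ revBits k y2 [MOD 2 ^ (k - l + 1)] :=
        revBits_modEq k l hl hlk heq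
      rw [hx1, hx2] at hmod
      have hdvd' : (2:ℕ) ^ (k - l + 1) ∣ y - x := (Nat.modEq_iff_dvd' (le_of_lt hxy)).1 hmod
      have hst : stepA k (l :: β) = 2 ^ (k - l + 1) := rfl
      rw [hst]
      exact Nat.le_of_dvd (by omega) hdvd'
end
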